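/- Let G be a finite group acting linearly on W over a field F with char F not dividing |G|. Then β(G,W) ≤ b(G,W) + 1, where b(G,W) is the top degree of the coinvariant algebra S(W)/(S(W)_+^G S(W)). -/

import Mathlib

noncomputable section
open MvPolynomial

variable {F : Type} [Field F]

/-- The algebra homomorphism between polynomial algebras (viewed as symmetric algebras)
induced by a linear map between the spaces of variables (the degree one components). -/
noncomputable def algOf {α β : Type} [Fintype α] [Fintype β] [DecidableEq α]
    (f : (α → F) →ₗ[F] (β → F)) :
    MvPolynomial α F →ₐ[F] MvPolynomial β F :=
  aeval fun j => ∑ i, f (Pi.single j 1) i • X i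

/-- The embedding of the space of linear forms into the polynomial algebra. -/
noncomputable def lin {β : Type} [Fintype β] (w : β → F) : MvPolynomial β F :=
  ∑ i, w i • X i

/-- The subalgebra of `G`-invariants of the symmetric algebra of a representation. -/
def invariants {G : Type} [Group G] {α : Type} [Fintype α] [DecidableEq α]
    (ρ : Representation F G (α → F)) : Subalgebra F (MvPolynomial α F) where
  carrier := {p | ∀ g : G, algOf (ρ g) p = p}
  mul_mem' := fun ha hb g => by rw [map_mul, ha g, hb g]
  add_mem' := fun ha hb g => by rw [map_add, ha g, hb g]
  algebraMap_mem' := fun r g => (algOf (ρ g)).commutes r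

variable {G : Type} [Group G] {α : Type} [Fintype α] [DecidableEq α]

/-- The invariant ring is generated as an `F`-algebra in degrees at most `d`. -/
def genLE (ρ : Representation F G (α → F)) (d : ℕ) : Prop :=
  Algebra.adjoin F {p : MvPolynomial α F | p ∈ invariants ρ ∧ p.totalDegree ≤ d}
    = invariants ρ

/-- The Noether number `β(G,W)` of a representation. -/
def noether (ρ : Representation F G (α → F)) : ℕ := sInf {d | genLE ρ d}

/-- The Hilbert ideal: the ideal of `S(W)` generated by the invariants of positive degree. -/
def hilbertIdeal (ρ : Representation F G (α → F)) : Ideal (MvPolynomial α F) :=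
  Ideal.span {p | p ∈ invariants ρ ∧ constantCoeff p = 0}

/-- `b(G,W)`: the top degree of the algebra of coinvariants `S(W)/S(W)₊^G S(W)`. -/
def coinvTop (ρ : Representation F G (α → F)) : ℕ :=
  sSup {d | ∃ p : MvPolynomial α F, p.IsHomogeneous d ∧ p ∉ hilbertIdeal ρ}

/-- `b_k(G,W)`: the top degree of `S(W)/((S(W)₊^G)^k S(W))`. -/
def coinvTopK (ρ : Representation F G (α → F)) (k : ℕ) : ℕ :=
  sSup {d | ∃ p : MvPolynomial α F, p.IsHomogeneous d ∧ p ∉ (hilbertIdeal ρ) ^ k}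

/-- The span of all products of `k` positive-degree invariants,
i.e. `(S(W)₊^G)^k` computed inside the invariant ring. -/
def prodPow (ρ : Representation F G (α → F)) (k : ℕ) : Submodule F (MvPolynomial α F) :=
  Submodule.span F {x | ∃ f : Fin k → MvPolynomial α F,
    (∀ i, f i ∈ invariants ρ ∧ constantCoeff (f i) = 0) ∧ x = ∏ i, f i}

/-- The `k`-th Noether number `β_k(G,W)`, the top degree of `S(W)^G/(S(W)₊^G)^{k+1}`. -/
def noetherK (ρ : Representation F G (α → F)) (k : ℕ) : ℕ :=
  sSup {d | ∃ p, p ∈ invariants ρ ∧ p.IsHomogeneous d ∧ p ∉ prodPow ρ (k+1)}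

/-- `β(G)`: the supremum of the Noether numbers over all finite dimensional modules. -/
def noetherSup (F G : Type) [Field F] [Group G] : ℕ∞ :=
  ⨆ (n : ℕ) (ρ : Representation F G (Fin n → F)), (noether ρ : ℕ∞)

/-- `b(G)`: the supremum of `b(G,W)` over all finite dimensional modules. -/
def coinvSup (F G : Type) [Field F] [Group G] : ℕ∞ :=
  ⨆ (n : ℕ) (ρ : Representation F G (Fin n → F)), (coinvTop ρ : ℕ∞)

/-- `β_k(G)`: the supremum of the `k`-th Noether numbers over all modules. -/
def noetherKSup (F G : Type) [Field F] [Group G] (k : ℕ) : ℕ∞ :=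
  ⨆ (n : ℕ) (ρ : Representation F G (Fin n → F)), (noetherK ρ k : ℕ∞)

/- ### auxiliary lemmas -/

theorem algOf_X {α β : Type} [Fintype α] [Fintype β] [DecidableEq α]
    (f : (α → F) →ₗ[F] (β → F)) (j : α) :
    algOf f (X j) = ∑ i, f (Pi.single j 1) i • X i := by
  simp [algOf]

theorem algOf_comp {α β γ : Type} [Fintype α] [Fintype β] [Fintype γ]
    [DecidableEq α] [DecidableEq β]
    (f : (β → F) →ₗ[F] (γ → F)) (g : (α → F) →ₗ[F] (β → F)) (p : MvPolynomial α F) :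
    algOf f (algOf g p) = algOf (f ∘ₗ g) p := by
  have h : (algOf f).comp (algOf g) = algOf (f ∘ₗ g) := by
    apply MvPolynomial.algHom_ext
    intro j
    simp only [AlgHom.comp_apply, algOf_X, map_sum, map_smul, Finset.smul_sum]
    rw [Finset.sum_comm]
    refine Finset.sum_congr rfl fun k _ => ?_
    have hg : g (Pi.single j 1) = ∑ i, (g (Pi.single j 1) i) • (Pi.single i (1:F) : β → F) := by
      ext x; simp [Finset.sum_apply, Pi.single_apply]
    rw [LinearMap.comp_apply, hg, map_sum]
    simp only [map_smul, Finset.sum_apply, Pi.smul_apply, smul_eq_mul, Finset.sum_smul,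
      smul_smul]
    simp [Pi.single_apply]
  exact DFunLike.congr_fun h p

theorem algOf_id {α : Type} [Fintype α] [DecidableEq α] (p : MvPolynomial α F) :
    algOf (LinearMap.id : (α → F) →ₗ[F] (α → F)) p = p := by
  have h : (algOf (LinearMap.id : (α → F) →ₗ[F] (α → F))) = AlgHom.id F _ := by
    apply MvPolynomial.algHom_ext
    intro j
    simp only [algOf_X, LinearMap.id_coe, id_eq, AlgHom.coe_id]
    rw [Finset.sum_eq_single j] <;> simp +contextual [Pi.single_apply, eq_comm]
  rw [h]; rfl

theorem algOf_isHomogeneous {α β : Type} [Fintype α] [Fintype β] [DecidableEq α]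
    (f : (α → F) →ₗ[F] (β → F)) {p : MvPolynomial α F} {m : ℕ}
    (hp : p.IsHomogeneous m) : (algOf f p).IsHomogeneous m := by
  have h := hp.aeval (R := F) (fun j => ∑ i, f (Pi.single j 1) i • X i) (n := 1)
    (fun j => IsHomogeneous.sum _ _ _ fun i _ => by
      rw [smul_eq_C_mul]; exact (isHomogeneous_X _ _).C_mul _)
  simpa [algOf] using h

theorem algOf_mul (ρ : Representation F G (α → F)) (g h : G) (p : MvPolynomial α F) :
    algOf (ρ g) (algOf (ρ h) p) = algOf (ρ (g * h)) p := by
  rw [algOf_comp, map_mul]; rfl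

theorem constantCoeff_algOf_X {α β : Type} [Fintype α] [Fintype β] [DecidableEq α]
    (f : (α → F) →ₗ[F] (β → F)) (j : α) :
    constantCoeff (algOf f (X j)) = 0 := by
  simp [algOf_X, smul_eq_C_mul]

theorem algOf_homogeneousComponent {α β : Type} [Fintype α] [Fintype β] [DecidableEq α]
    (f : (α → F) →ₗ[F] (β → F)) (d : ℕ) (p : MvPolynomial α F) :
    algOf f (homogeneousComponent d p) = homogeneousComponent d (algOf f p) := by
  conv_rhs => rw [← sum_homogeneousComponent p, map_sum, map_sum]
  rw [Finset.sum_congr rfl (fun i _ => homogeneousComponent_of_mem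
    ((mem_homogeneousSubmodule _ _).2
      (algOf_isHomogeneous f (homogeneousComponent_isHomogeneous i p))))]
  rw [Finset.sum_ite_eq]
  split_ifs with h
  · rfl
  · rw [homogeneousComponent_eq_zero, map_zero]
    simpa using Nat.lt_of_succ_le (Nat.le_of_not_lt (by simpa [Finset.mem_range] using h))

theorem hc_invariant {ρ : Representation F G (α → F)} {p : MvPolynomial α F}
    (hp : p ∈ invariants ρ) (d : ℕ) : homogeneousComponent d p ∈ invariants ρ := by
  intro g
  rw [algOf_homogeneousComponent, hp g]

/- ### the Reynolds operator -/

def tau (ρ : Representation F G (α → F)) [Fintype G] (p : MvPolynomial α F) :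
    MvPolynomial α F :=
  (Fintype.card G : F)⁻¹ • ∑ g : G, algOf (ρ g) p

variable [Fintype G]

theorem tau_mem (ρ : Representation F G (α → F)) (p : MvPolynomial α F) :
    tau ρ p ∈ invariants ρ := by
  intro h
  rw [tau, map_smul, map_sum]
  congr 1
  rw [Finset.sum_congr rfl fun g _ => algOf_mul ρ h g p]
  exact Fintype.sum_equiv (Equiv.mulLeft h) _ _ fun g => rfl

theorem tau_of_invariant {ρ : Representation F G (α → F)} {p : MvPolynomial α F}
    (hchar : (Fintype.card G : F) ≠ 0) (hp : p ∈ invariants ρ) : tau ρ p = p := by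
  rw [tau, Finset.sum_congr rfl fun g _ => hp g, Finset.sum_const, Finset.card_univ,
    ← Nat.cast_smul_eq_nsmul F, smul_smul, inv_mul_cancel₀ hchar, one_smul]

theorem tau_mul (ρ : Representation F G (α → F)) {p : MvPolynomial α F}
    (hp : p ∈ invariants ρ) (q : MvPolynomial α F) :
    tau ρ (p * q) = p * tau ρ q := by
  rw [tau, tau, Finset.sum_congr rfl fun g _ => by rw [map_mul, hp g],
    ← Finset.mul_sum, mul_smul_comm]

theorem tau_zero (ρ : Representation F G (α → F)) : tau ρ 0 = 0 := by
  simp [tau]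

theorem tau_add (ρ : Representation F G (α → F)) (p q : MvPolynomial α F) :
    tau ρ (p + q) = tau ρ p + tau ρ q := by
  simp [tau, Finset.sum_add_distrib, smul_add]

theorem tau_smul (ρ : Representation F G (α → F)) (c : F) (p : MvPolynomial α F) :
    tau ρ (c • p) = c • tau ρ p := by
  simp only [tau, map_smul, ← Finset.smul_sum, smul_comm c]

theorem tau_isHomogeneous (ρ : Representation F G (α → F)) {p : MvPolynomial α F} {m : ℕ}
    (hp : p.IsHomogeneous m) : (tau ρ p).IsHomogeneous m := by
  rw [tau, smul_eq_C_mul]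
  exact (IsHomogeneous.sum _ _ _ fun g _ => algOf_isHomogeneous _ hp).C_mul _

/- ### X i ^ |G| lies in the Hilbert ideal -/

theorem Xpow_mem (ρ : Representation F G (α → F)) (i : α) :
    (X i : MvPolynomial α F) ^ (Fintype.card G) ∈ hilbertIdeal ρ := by
  classical
  set P : Polynomial (MvPolynomial α F) :=
    ∏ g : G, (Polynomial.X - Polynomial.C (algOf (ρ g) (X i))) with hP
  have hmonic : P.Monic := Polynomial.monic_prod_of_monic _ _
    (fun g _ => Polynomial.monic_X_sub_C _)
  have hdeg : P.natDegree = Fintype.card G := by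
    rw [hP, Polynomial.natDegree_prod_of_monic _ _ (fun g _ => Polynomial.monic_X_sub_C _)]
    simp
  have heval : Polynomial.eval (X i) P = 0 := by
    rw [hP, Polynomial.eval_prod]
    refine Finset.prod_eq_zero (Finset.mem_univ (1 : G)) ?_
    rw [map_one]
    have : algOf ((1 : Module.End F (α → F))) (X i : MvPolynomial α F) = X i := by
      have : (1 : Module.End F (α → F)) = LinearMap.id := rfl
      rw [this, algOf_id]
    simp [this]
  -- coefficients are invariant
  have hinv : ∀ k, P.coeff k ∈ invariants ρ := by
    intro k h
    have hmap : Polynomial.map ((algOf (ρ h)) : MvPolynomial α F →+* MvPolynomial α F) P = P := by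
      rw [hP, Polynomial.map_prod]
      simp only [Polynomial.map_sub, Polynomial.map_X, Polynomial.map_C]
      have : ∀ g : G, (algOf (ρ h) : MvPolynomial α F →+* MvPolynomial α F) (algOf (ρ g) (X i))
          = algOf (ρ (h * g)) (X i) := fun g => algOf_mul ρ h g (X i)
      rw [Finset.prod_congr rfl fun g _ => by rw [this g]]
      exact Fintype.prod_equiv (Equiv.mulLeft h) _ _ fun g => rfl
    calc algOf (ρ h) (P.coeff k)
        = (Polynomial.map ((algOf (ρ h)) : MvPolynomial α F →+* MvPolynomial α F) P).coeff k := by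
          rw [Polynomial.coeff_map]; rfl
      _ = P.coeff k := by rw [hmap]
  -- coefficients below top degree have zero constant coefficient
  have hcc : ∀ k, k < Fintype.card G → constantCoeff (P.coeff k) = 0 := by
    intro k hk
    have hmap : Polynomial.map (constantCoeff : MvPolynomial α F →+* F) P
        = Polynomial.X ^ (Fintype.card G) := by
      rw [hP, Polynomial.map_prod]
      simp only [Polynomial.map_sub, Polynomial.map_X, Polynomial.map_C, constantCoeff_algOf_X,
        map_zero, sub_zero]
      simp
    have := congrArg (fun q => Polynomial.coeff q k) hmap
    simp only [Polynomial.coeff_map, Polynomial.coeff_X_pow, if_neg (Nat.ne_of_lt hk)] at this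
    exact this
  -- now expand the evaluation
  have hx : (X i : MvPolynomial α F) ^ (Fintype.card G)
      = - ∑ k ∈ Finset.range (Fintype.card G), P.coeff k * (X i) ^ k := by
    have h1 := Polynomial.eval_eq_sum_range (p := P) (x := (X i : MvPolynomial α F))
    rw [heval, hdeg, Finset.sum_range_succ] at h1
    have h2 : P.coeff (Fintype.card G) = 1 := by
      have := hmonic.coeff_natDegree
      rwa [hdeg] at this
    rw [h2, one_mul] at h1
    linear_combination -h1
  rw [hx]
  refine neg_mem (Ideal.sum_mem _ fun k hk => Ideal.mul_mem_right _ _ ?_)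
  exact Ideal.subset_span ⟨hinv k, hcc k (Finset.mem_range.1 hk)⟩

/- ### all homogeneous polynomials of large degree lie in the Hilbert ideal -/

theorem homog_mem_of_big (ρ : Representation F G (α → F)) {p : MvPolynomial α F} {d : ℕ}
    (hd : Fintype.card α * (Fintype.card G - 1) < d) (hp : p.IsHomogeneous d) :
    p ∈ hilbertIdeal ρ := by
  classical
  rw [p.as_sum]
  refine Ideal.sum_mem _ fun u hu => ?_
  have hdeg : u.degree = d := by
    rw [Finsupp.degree_eq_weight_one]; exact hp (mem_support_iff.1 hu)
  -- find a coordinate with large exponent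
  have hex : ∃ i, Fintype.card G ≤ u i := by
    by_contra hno
    push_neg at hno
    have : u.degree ≤ Fintype.card α * (Fintype.card G - 1) := by
      calc u.degree ≤ ∑ i : α, u i := Finset.sum_le_sum_of_subset (Finset.subset_univ _)
        _ ≤ Fintype.card α * (Fintype.card G - 1) := by
            rw [← smul_eq_mul, ← Finset.card_univ]
            exact Finset.sum_le_card_nsmul _ _ _ fun i _ => Nat.le_sub_one_of_lt (hno i)
    omega
  obtain ⟨i, hi⟩ := hex
  have hle : Finsupp.single i (Fintype.card G) ≤ u := by
    rw [Finsupp.single_le_iff]; exact hi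
  have hsplit : monomial u (coeff u p)
      = monomial (u - Finsupp.single i (Fintype.card G)) (coeff u p)
        * (X i) ^ (Fintype.card G) := by
    rw [X_pow_eq_monomial, monomial_mul, mul_one, tsub_add_cancel_of_le hle]
  rw [hsplit]
  exact Ideal.mul_mem_left _ _ (Xpow_mem ρ i)

theorem bddAbove_coinv (ρ : Representation F G (α → F)) :
    BddAbove {d | ∃ p : MvPolynomial α F, p.IsHomogeneous d ∧ p ∉ hilbertIdeal ρ} := by
  refine ⟨Fintype.card α * (Fintype.card G - 1), fun e he => ?_⟩
  obtain ⟨p, hp, hnp⟩ := he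
  by_contra hlt
  exact hnp (homog_mem_of_big ρ (Nat.lt_of_not_le hlt) hp)

theorem homog_mem_of_gt_coinvTop (ρ : Representation F G (α → F)) {p : MvPolynomial α F}
    {d : ℕ} (hd : coinvTop ρ < d) (hp : p.IsHomogeneous d) : p ∈ hilbertIdeal ρ := by
  by_contra hnp
  exact absurd (le_csSup (bddAbove_coinv ρ) (Set.mem_setOf.2 ⟨p, hp, hnp⟩)) (Nat.not_le.2 hd)

/- ### homogeneous decomposition of membership in the Hilbert ideal -/

theorem hc_mul_homog_le {c t : MvPolynomial α F} {d m : ℕ} (ht : t.IsHomogeneous d)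
    (hdm : d ≤ m) :
    homogeneousComponent m (c * t) = homogeneousComponent (m - d) c * t := by
  conv_lhs => rw [← sum_homogeneousComponent c, Finset.sum_mul, map_sum]
  rw [Finset.sum_congr rfl (fun j _ => homogeneousComponent_of_mem
    ((mem_homogeneousSubmodule _ _).2 ((homogeneousComponent_isHomogeneous j c).mul ht)))]
  have hcond : ∀ j, (m = j + d) = (j = m - d) := fun j => by
    apply propext; omega
  rw [Finset.sum_congr rfl fun j _ => if_congr (iff_of_eq (hcond j)) rfl rfl]
  rw [Finset.sum_ite_eq' (Finset.range (c.totalDegree + 1)) (m - d)]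
  split_ifs with h
  · rfl
  · rw [homogeneousComponent_eq_zero, zero_mul]
    simp only [Finset.mem_range, not_lt] at h
    omega

theorem hc_mul_homog_gt {c t : MvPolynomial α F} {d m : ℕ} (ht : t.IsHomogeneous d)
    (hdm : m < d) :
    homogeneousComponent m (c * t) = 0 := by
  conv_lhs => rw [← sum_homogeneousComponent c, Finset.sum_mul, map_sum]
  rw [Finset.sum_congr rfl (fun j _ => homogeneousComponent_of_mem
    ((mem_homogeneousSubmodule _ _).2 ((homogeneousComponent_isHomogeneous j c).mul ht)))]
  refine Finset.sum_eq_zero fun j _ => ?_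
  rw [if_neg]; omega

/-- `E ρ m`: products `f * h` with `f` an invariant homogeneous of degree `d ∈ (0, m]` and
`h` homogeneous of degree `m - d`. -/
def Eset (ρ : Representation F G (α → F)) (m : ℕ) : Set (MvPolynomial α F) :=
  {x | ∃ (f h : MvPolynomial α F) (d : ℕ), f ∈ invariants ρ ∧ f.IsHomogeneous d ∧
    0 < d ∧ d ≤ m ∧ h.IsHomogeneous (m - d) ∧ x = f * h}

theorem hilbertIdeal_le_span_homog (ρ : Representation F G (α → F)) :
    hilbertIdeal ρ ≤ Ideal.span {f | f ∈ invariants ρ ∧ ∃ d, 0 < d ∧ f.IsHomogeneous d} := by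
  rw [hilbertIdeal, Ideal.span_le]
  rintro f ⟨hf, hcc⟩
  rw [SetLike.mem_coe, ← sum_homogeneousComponent f]
  refine Ideal.sum_mem _ fun i _ => ?_
  rcases Nat.eq_zero_or_pos i with hi | hi
  · subst hi
    rw [homogeneousComponent_zero]
    rw [show coeff 0 f = constantCoeff f from rfl, hcc, map_zero]
    exact zero_mem _
  · exact Ideal.subset_span ⟨hc_invariant hf i, i, hi, homogeneousComponent_isHomogeneous i f⟩

theorem mem_span_E (ρ : Representation F G (α → F)) {p : MvPolynomial α F} {m : ℕ}
    (hmem : p ∈ hilbertIdeal ρ) (hp : p.IsHomogeneous m) :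
    p ∈ Submodule.span F (Eset ρ m) := by
  classical
  have h1 := hilbertIdeal_le_span_homog ρ hmem
  rw [Ideal.span, Submodule.mem_span_set'] at h1
  obtain ⟨k, c, t, hsum⟩ := h1
  have hp' : homogeneousComponent m p = p :=
    homogeneousComponent_of_mem ((mem_homogeneousSubmodule _ _).2 hp) |>.trans (if_pos rfl)
  rw [← hp', ← hsum, map_sum]
  refine Submodule.sum_mem _ fun j _ => ?_
  obtain ⟨tj, htj⟩ := t j
  obtain ⟨hinv, d, hd0, hhom⟩ := htj
  simp only [smul_eq_mul]
  rcases le_or_gt d m with hdm | hdm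
  · rw [hc_mul_homog_le hhom hdm]
    exact Submodule.subset_span ⟨tj, _, d, hinv, hhom, hd0, hdm,
      homogeneousComponent_isHomogeneous _ _, mul_comm _ _⟩
  · rw [hc_mul_homog_gt hhom hdm]
    exact zero_mem _

/-- `E' ρ m`: as `Eset` but with strict degree bound `d < m`. -/
def Eset' (ρ : Representation F G (α → F)) (m : ℕ) : Set (MvPolynomial α F) :=
  {x | ∃ (f h : MvPolynomial α F) (d : ℕ), f ∈ invariants ρ ∧ f.IsHomogeneous d ∧
    0 < d ∧ d < m ∧ h.IsHomogeneous (m - d) ∧ x = f * h}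

theorem mem_span_E' (ρ : Representation F G (α → F)) {p : MvPolynomial α F} {m : ℕ}
    (hm1 : 1 ≤ m) (hb : coinvTop ρ < m - 1) (hp : p.IsHomogeneous m) :
    p ∈ Submodule.span F (Eset' ρ m) := by
  classical
  rw [p.as_sum]
  refine Submodule.sum_mem _ fun u hu => ?_
  have hdeg : u.degree = m := by
    rw [Finsupp.degree_eq_weight_one]; exact hp (mem_support_iff.1 hu)
  have hex : ∃ i, 1 ≤ u i := by
    by_contra hno
    push_neg at hno
    have : u = 0 := by
      ext i; exact Nat.lt_one_iff.1 (hno i)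
    rw [this] at hdeg
    simp [Finsupp.degree] at hdeg
    omega
  obtain ⟨i, hi⟩ := hex
  have hle : Finsupp.single i 1 ≤ u := by rw [Finsupp.single_le_iff]; exact hi
  set v := u - Finsupp.single i 1 with hv
  have hvd : v.degree = m - 1 := by
    have hadd : v + Finsupp.single i 1 = u := tsub_add_cancel_of_le hle
    have h2 : (v + Finsupp.single i 1).degree = v.degree + (Finsupp.single i 1).degree := by
      simp [Finsupp.degree_eq_weight_one, map_add]
    have h3 : (Finsupp.single i (1:ℕ)).degree = 1 := by
      exact Finsupp.degree_single i 1
    rw [hadd] at h2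
    omega
  have hmon : (monomial v (coeff u p)).IsHomogeneous (m - 1) :=
    isHomogeneous_monomial _ hvd
  have hmem : monomial v (coeff u p) ∈ Submodule.span F (Eset ρ (m - 1)) :=
    mem_span_E ρ (homog_mem_of_gt_coinvTop ρ hb hmon) hmon
  have hsplit : monomial u (coeff u p) = X i * monomial v (coeff u p) := by
    rw [X, monomial_mul, one_mul, hv, add_comm, tsub_add_cancel_of_le hle]
  rw [hsplit]
  -- multiply the span membership by X i
  refine Submodule.span_induction (p := fun r _ => X i * r ∈ Submodule.span F (Eset' ρ m))
    ?_ ?_ ?_ ?_ hmem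
  · rintro x ⟨f, h, d, hinv, hfh, hd0, hdm, hh, rfl⟩
    rw [show X i * (f * h) = f * (X i * h) by ring]
    refine Submodule.subset_span ⟨f, X i * h, d, hinv, hfh, hd0, by omega, ?_, rfl⟩
    have := (isHomogeneous_X F i).mul hh
    rwa [show 1 + (m - 1 - d) = m - d by omega] at this
  · show X i * (0 : MvPolynomial α F) ∈ _
    rw [mul_zero]; exact zero_mem _
  · intro x y _ _ hx hy
    show X i * (x + y) ∈ _
    rw [mul_add]; exact add_mem hx hy
  · intro a x _ hx
    show X i * (a • x) ∈ _
    rw [mul_smul_comm]; exact Submodule.smul_mem _ _ hx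

/- ### main theorem -/

theorem key_claim (ρ : Representation F G (α → F)) (hchar : (Fintype.card G : F) ≠ 0)
    (m : ℕ) : ∀ p : MvPolynomial α F, p ∈ invariants ρ → p.IsHomogeneous m →
    p ∈ Algebra.adjoin F
      {q : MvPolynomial α F | q ∈ invariants ρ ∧ q.totalDegree ≤ coinvTop ρ + 1} := by
  induction m using Nat.strong_induction_on with
  | _ m IH =>
    intro p hp hhom
    set b := coinvTop ρ with hb
    rcases le_or_gt m (b + 1) with hm | hm
    · exact Algebra.subset_adjoin ⟨hp, hhom.totalDegree_le.trans hm⟩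
    · have h1 : 1 ≤ m := by omega
      have h2 : b < m - 1 := by omega
      have hspan := mem_span_E' ρ h1 h2 hhom
      have htau : ∀ r ∈ Submodule.span F (Eset' ρ m), tau ρ r ∈ Algebra.adjoin F
          {q : MvPolynomial α F | q ∈ invariants ρ ∧ q.totalDegree ≤ b + 1} := by
        intro r hr
        refine Submodule.span_induction (p := fun r _ => tau ρ r ∈ Algebra.adjoin F
          {q : MvPolynomial α F | q ∈ invariants ρ ∧ q.totalDegree ≤ b + 1})
          ?_ ?_ ?_ ?_ hr
        · rintro x ⟨f, h, d, hinv, hfh, hd0, hdm, hh, rfl⟩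
          rw [tau_mul ρ hinv]
          exact mul_mem (IH d hdm f hinv hfh)
            (IH (m - d) (by omega) _ (tau_mem ρ h) (tau_isHomogeneous ρ hh))
        · show tau ρ 0 ∈ _
          rw [tau_zero]; exact zero_mem _
        · intro x y _ _ hx hy
          show tau ρ (x + y) ∈ _
          rw [tau_add]; exact add_mem hx hy
        · intro a x _ hx
          show tau ρ (a • x) ∈ _
          rw [tau_smul]
          exact Subalgebra.smul_mem _ hx a
      have := htau p hspan
      rwa [tau_of_invariant hchar hp] at this

theorem genLE_succ_coinvTop (ρ : Representation F G (α → F))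
    (hchar : (Fintype.card G : F) ≠ 0) : genLE ρ (coinvTop ρ + 1) := by
  apply le_antisymm
  · exact Algebra.adjoin_le fun p hp => hp.1
  · intro p hp
    rw [← sum_homogeneousComponent p]
    refine Subalgebra.sum_mem _ fun i _ => ?_
    exact key_claim ρ hchar i _ (hc_invariant hp i) (homogeneousComponent_isHomogeneous i p)


/-- `β(G,W) ≤ b(G,W) + 1` where `b(G,W)` is the top degree of the
coinvariant algebra. -/
theorem stmt3 {G : Type} [Group G] [Fintype G] {n : ℕ}
    (hchar : (Fintype.card G : F) ≠ 0)
    (ρ : Representation F G (Fin n → F)) :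
    noether ρ ≤ coinvTop ρ + 1 :=
  Nat.sInf_le (genLE_succ_coinvTop ρ hchar)

end
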